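/- Let (ν, P, P̃, U) ∈ K_d, fix a positive integer N, and let m, m̃ ∈ ℕ₀^d with |m| ≤ N and |m̃| ≤ N. Then: −|m| 𝒫(m, m̃) = p_0 ∑_{l=1}^{d} m̃_l 𝒫(m, m̃ − v_l) + ∑_{l=1}^{d} p_l (N − |m̃|) 𝒫(m, m̃ + v_l) + ∑_{1 ≤ k ≠ l ≤ d} p_k m̃_l 𝒫(m, m̃ + v_k − v_l) + ( ∑_{j=1}^{d} m̃_j p_j + p_0 (N − |m̃|) − N ) 𝒫(m, m̃), where v_1,...,v_d is the standard basis of ℤ^d and each term carrying a factor m̃_l or (N − |m̃|) is interpreted as 0 when that factor vanishes. -/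

import Mathlib

open Matrix Finset

/-- The multivariate Krawtchouk polynomial `𝒫(m, m̃)` of Griffiths, in the
Gelfand hypergeometric form of Mizukawa–Tanaka, with `ω_{i,j} = 1 - u_{i,j}`.
The sum is over all `d × d` matrices `A` with entries in `{0,…,N}` whose
total entry sum is at most `N` (i.e. over `M_{d,N}`). -/
noncomputable def kraw (d N : ℕ) (U : Matrix (Fin (d+1)) (Fin (d+1)) ℂ)
    (m mt : Fin d → ℕ) : ℂ :=
  ∑ A : Fin d → Fin d → Fin (N+1),
    if (∑ i, ∑ j, (A i j : ℕ)) ≤ N then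
      (∏ j, (ascPochhammer ℂ (∑ i, (A i j : ℕ))).eval (-(m j : ℂ))) *
        (∏ i, (ascPochhammer ℂ (∑ j, (A i j : ℕ))).eval (-(mt i : ℂ))) /
        (ascPochhammer ℂ (∑ i, ∑ j, (A i j : ℕ))).eval (-(N : ℂ)) *
        ∏ i, ∏ j, (1 - U i.succ j.succ) ^ (A i j : ℕ) / ((A i j : ℕ).factorial : ℂ)
    else 0

lemma poch_succ_left_eval (r : ℕ) (y : ℂ) :
    (ascPochhammer ℂ (r+1)).eval y = y * (ascPochhammer ℂ r).eval (y+1) := by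
  rw [ascPochhammer_succ_left]
  simp [Polynomial.eval_comp]

lemma pochL1 (r : ℕ) (x : ℂ) :
    (x + 1) * (ascPochhammer ℂ r).eval (-x)
      = (x + 1 - r) * (ascPochhammer ℂ r).eval (-x - 1) := by
  induction r with
  | zero => simp
  | succ r ih =>
    rw [ascPochhammer_succ_eval, ascPochhammer_succ_eval]
    push_cast
    linear_combination ((-x : ℂ) + r) * ih

lemma pochA (n r : ℕ) :
    (n : ℂ) * (ascPochhammer ℂ r).eval (-((n - 1 : ℕ) : ℂ))
      = ((n : ℂ) - r) * (ascPochhammer ℂ r).eval (-(n : ℂ)) := by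
  cases n with
  | zero =>
    cases r with
    | zero => simp
    | succ r => simp
  | succ n =>
    have h := pochL1 r (n : ℂ)
    push_cast [Nat.add_sub_cancel]
    push_cast at h
    have e : -((n:ℂ) + 1) = -(n:ℂ) - 1 := by ring
    rw [e]
    linear_combination h

lemma pochB (c r : ℕ) :
    (ascPochhammer ℂ r).eval (-((c : ℂ) + 1))
      = (ascPochhammer ℂ r).eval (-(c : ℂ))
        - r * (ascPochhammer ℂ (r-1)).eval (-(c : ℂ)) := by
  cases r with
  | zero => simp
  | succ r =>
    have h : (-(((c:ℂ)) + 1)) = (-(c:ℂ)) - 1 := by ring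
    rw [h, show (-(c:ℂ)) - 1 = (-(c:ℂ) - 1) from rfl]
    have h2 := poch_succ_left_eval r (-(c:ℂ) - 1)
    rw [h2, ascPochhammer_succ_eval]
    push_cast [Nat.succ_sub_one]
    have : (-(c:ℂ) - 1 + 1) = -(c:ℂ) := by ring
    rw [this]
    ring

lemma pochC (r : ℕ) (x : ℂ) :
    (r : ℂ) * ((ascPochhammer ℂ (r-1)).eval x * (x + r - 1))
      = (r : ℂ) * (ascPochhammer ℂ r).eval x := by
  cases r with
  | zero => simp
  | succ r =>
    rw [Nat.succ_sub_one, ascPochhammer_succ_eval]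
    push_cast
    ring

lemma poch_eval_neg_nat_zero {a b : ℕ} (h : a < b) :
    (ascPochhammer ℂ b).eval (-(a : ℂ)) = 0 := by
  induction b with
  | zero => omega
  | succ b ih =>
    rw [ascPochhammer_succ_eval]
    rcases lt_or_eq_of_le (Nat.lt_succ_iff.mp h) with h' | h'
    · rw [ih h', zero_mul]
    · subst h'
      simp

lemma poch_eval_neg_nat_ne_zero {t Nn : ℕ} (h : t ≤ Nn) :
    (ascPochhammer ℂ t).eval (-(Nn : ℂ)) ≠ 0 := by
  induction t with
  | zero => simp
  | succ t ih =>
    rw [ascPochhammer_succ_eval]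
    refine mul_ne_zero (ih (by omega)) ?_
    have : (t : ℂ) ≠ (Nn : ℂ) := by
      intro hh
      have : t = Nn := by exact_mod_cast hh
      omega
    intro hc
    apply this
    linear_combination hc

section Defs
variable {d N : ℕ}

def rA (A : Fin d → Fin d → Fin (N+1)) (i : Fin d) : ℕ := ∑ j, (A i j : ℕ)
def cA (A : Fin d → Fin d → Fin (N+1)) (j : Fin d) : ℕ := ∑ i, (A i j : ℕ)
def tA (A : Fin d → Fin d → Fin (N+1)) : ℕ := ∑ i, ∑ j, (A i j : ℕ)

noncomputable def Phi (U : Matrix (Fin (d+1)) (Fin (d+1)) ℂ) (m : Fin d → ℕ)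
    (A : Fin d → Fin d → Fin (N+1)) : ℂ :=
  (∏ j, (ascPochhammer ℂ (cA A j)).eval (-(m j : ℂ)))
    / (ascPochhammer ℂ (tA A)).eval (-(N : ℂ))
    * ∏ i, ∏ j, (1 - U i.succ j.succ) ^ (A i j : ℕ) / ((A i j : ℕ).factorial : ℂ)

noncomputable def Ff (A : Fin d → Fin d → Fin (N+1)) (mt : Fin d → ℕ) : ℂ :=
  ∏ i, (ascPochhammer ℂ (rA A i)).eval (-(mt i : ℂ))

noncomputable def Gg (A : Fin d → Fin d → Fin (N+1)) (k : Fin d) (mt : Fin d → ℕ) : ℂ :=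
  (ascPochhammer ℂ (rA A k - 1)).eval (-(mt k : ℂ))
    * ∏ i ∈ Finset.univ.erase k, (ascPochhammer ℂ (rA A i)).eval (-(mt i : ℂ))

lemma kraw_eq (U : Matrix (Fin (d+1)) (Fin (d+1)) ℂ) (m mt : Fin d → ℕ) :
    kraw d N U m mt
      = ∑ A : Fin d → Fin d → Fin (N+1),
          if tA A ≤ N then Phi U m A * Ff A mt else 0 := by
  unfold kraw Phi Ff rA cA tA
  refine Finset.sum_congr rfl fun A _ => ?_
  by_cases h : (∑ i, ∑ j, (A i j : ℕ)) ≤ N <;> simp only [h, if_true, if_false]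
  ring

lemma update_prod (W : Fin d → ℕ → ℂ) (mt : Fin d → ℕ) (l : Fin d) (v : ℕ)
    (s : Finset (Fin d)) (hl : l ∈ s) :
    ∏ i ∈ s, W i (Function.update mt l v i)
      = W l v * ∏ i ∈ s.erase l, W i (mt i) := by
  have e : (fun i => W i (Function.update mt l v i))
      = Function.update (fun i => W i (mt i)) l (W l v) := by
    funext i
    by_cases h : i = l
    · subst h; simp
    · simp [Function.update_of_ne h]
  rw [e, Finset.prod_update_of_mem hl, Finset.sdiff_singleton_eq_erase]

lemma Ff_split (A : Fin d → Fin d → Fin (N+1)) (mt : Fin d → ℕ) (k : Fin d) :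
    Ff A mt = (ascPochhammer ℂ (rA A k)).eval (-(mt k : ℂ))
      * ∏ i ∈ Finset.univ.erase k, (ascPochhammer ℂ (rA A i)).eval (-(mt i : ℂ)) :=
  (Finset.mul_prod_erase _ _ (mem_univ k)).symm

lemma B1 (A : Fin d → Fin d → Fin (N+1)) (mt : Fin d → ℕ) (l : Fin d) :
    (mt l : ℂ) * Ff A (Function.update mt l (mt l - 1))
      = ((mt l : ℂ) - rA A l) * Ff A mt := by
  rw [Ff, update_prod (fun i x => (ascPochhammer ℂ (rA A i)).eval (-(x : ℂ))) mt l _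
    Finset.univ (mem_univ l), Ff_split A mt l]
  have h := pochA (mt l) (rA A l)
  linear_combination (∏ i ∈ Finset.univ.erase l,
    (ascPochhammer ℂ (rA A i)).eval (-(mt i : ℂ))) * h

lemma B2 (A : Fin d → Fin d → Fin (N+1)) (mt : Fin d → ℕ) (l : Fin d) :
    Ff A (Function.update mt l (mt l + 1))
      = Ff A mt - (rA A l : ℂ) * Gg A l mt := by
  rw [Ff, update_prod (fun i x => (ascPochhammer ℂ (rA A i)).eval (-(x : ℂ))) mt l _
    Finset.univ (mem_univ l), Ff_split A mt l, Gg]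
  have h := pochB (mt l) (rA A l)
  push_cast at h ⊢
  linear_combination (∏ i ∈ Finset.univ.erase l,
    (ascPochhammer ℂ (rA A i)).eval (-(mt i : ℂ))) * h

lemma B3 (A : Fin d → Fin d → Fin (N+1)) (mt : Fin d → ℕ) (k l : Fin d) (hlk : l ≠ k) :
    (mt l : ℂ) * Ff A (Function.update (Function.update mt k (mt k + 1)) l (mt l - 1))
      = ((mt l : ℂ) - rA A l) * (Ff A mt - (rA A k : ℂ) * Gg A k mt) := by
  set W : Fin d → ℕ → ℂ := fun i x => (ascPochhammer ℂ (rA A i)).eval (-(x : ℂ)) with hW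
  have e1 : Ff A (Function.update (Function.update mt k (mt k + 1)) l (mt l - 1))
      = W l (mt l - 1) * ∏ i ∈ Finset.univ.erase l, W i (Function.update mt k (mt k + 1) i) := by
    rw [Ff]
    exact update_prod W _ l _ Finset.univ (mem_univ l)
  have e2 : ∏ i ∈ Finset.univ.erase l, W i (Function.update mt k (mt k + 1) i)
      = W k (mt k + 1) * ∏ i ∈ (Finset.univ.erase l).erase k, W i (mt i) :=
    update_prod W mt k _ _ (Finset.mem_erase.mpr ⟨Ne.symm hlk, mem_univ k⟩)
  have e3 : Ff A mt = W l (mt l) * (W k (mt k) * ∏ i ∈ (Finset.univ.erase l).erase k, W i (mt i)) := by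
    rw [Ff_split A mt l]
    congr 1
    exact (Finset.mul_prod_erase _ _ (Finset.mem_erase.mpr ⟨Ne.symm hlk, mem_univ k⟩)).symm
  have e4 : Gg A k mt = (ascPochhammer ℂ (rA A k - 1)).eval (-(mt k : ℂ))
      * (W l (mt l) * ∏ i ∈ (Finset.univ.erase k).erase l, W i (mt i)) := by
    rw [Gg]
    congr 1
    exact (Finset.mul_prod_erase _ _ (Finset.mem_erase.mpr ⟨hlk, mem_univ l⟩)).symm
  rw [Finset.erase_right_comm (a := k) (b := l)] at e4
  rw [e1, e2, e3, e4]
  have hA := pochA (mt l) (rA A l)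
  have hB := pochB (mt k) (rA A k)
  push_cast at hB
  set R := ∏ i ∈ (Finset.univ.erase l).erase k, W i (mt i)
  set Y := (ascPochhammer ℂ (rA A k - 1)).eval (-(mt k : ℂ))
  have hWl : W l (mt l - 1) = (ascPochhammer ℂ (rA A l)).eval (-((mt l - 1 : ℕ) : ℂ)) := rfl
  have hWk : W k (mt k + 1) = (ascPochhammer ℂ (rA A k)).eval (-((mt k : ℂ) + 1)) := by
    simp only [hW]; push_cast; ring_nf
  rw [hWl, hWk, hB]
  linear_combination (((ascPochhammer ℂ (rA A k)).eval (-(mt k : ℂ)) - (rA A k : ℂ) * Y) * R) * hA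
lemma hfgA {d N : ℕ} (A : Fin d → Fin d → Fin (N+1)) (mt : Fin d → ℕ) (k : Fin d) :
    (rA A k : ℂ) * (Gg A k mt * (-(mt k : ℂ) + (rA A k : ℂ) - 1))
      = (rA A k : ℂ) * Ff A mt := by
  rw [Gg, Ff_split A mt k]
  have h := pochC (rA A k) (-(mt k : ℂ))
  linear_combination (∏ i ∈ Finset.univ.erase k,
    (ascPochhammer ℂ (rA A i)).eval (-(mt i : ℂ))) * h

lemma coefStep {d N : ℕ} (p : Fin (d+1) → ℂ) (hsum : ∑ j, p j = 1)
    (mt r : Fin d → ℕ) (t : ℕ) (ht : (t : ℂ) = ∑ k, (r k : ℂ))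
    (f : ℂ) (g : Fin d → ℂ)
    (hfg : ∀ k, (r k : ℂ) * (g k * (-(mt k : ℂ) + (r k : ℂ) - 1)) = (r k : ℂ) * f) :
    p 0 * (∑ l, ((mt l : ℂ) - (r l : ℂ)) * f)
      + (∑ l, p l.succ * ((N : ℂ) - ∑ i, (mt i : ℂ)) * (f - (r l : ℂ) * g l))
      + (∑ k, ∑ l ∈ Finset.univ.erase k,
          p k.succ * (((mt l : ℂ) - (r l : ℂ)) * (f - (r k : ℂ) * g k)))
      + ((∑ j, (mt j : ℂ) * p j.succ) + p 0 * ((N : ℂ) - ∑ i, (mt i : ℂ)) - (N : ℂ)) * f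
      = (-(t : ℂ)) * f - ((N : ℂ) + 1 - (t : ℂ)) * ∑ k, p k.succ * ((r k : ℂ) * g k) := by
  have hsum' : p 0 + ∑ l : Fin d, p l.succ = 1 := by
    rw [← Fin.sum_univ_succ]; exact hsum
  set M : ℂ := ∑ i, (mt i : ℂ) with hM
  have hsub : ∀ (C : ℂ), ∑ l, ((mt l : ℂ) - (r l : ℂ)) * C = (M - t) * C := by
    intro C
    rw [← Finset.sum_mul, Finset.sum_sub_distrib, ht, hM]
  have h1 : ∑ l, ((mt l : ℂ) - (r l : ℂ)) * f = (M - t) * f := hsub f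
  have h3 : (∑ k, ∑ l ∈ Finset.univ.erase k,
      p k.succ * (((mt l : ℂ) - (r l : ℂ)) * (f - (r k : ℂ) * g k)))
      = ∑ k, p k.succ * (((M - t) - ((mt k : ℂ) - (r k : ℂ))) * (f - (r k : ℂ) * g k)) := by
    refine Finset.sum_congr rfl fun k _ => ?_
    rw [← Finset.mul_sum, Finset.sum_erase_eq_sub (mem_univ k), hsub (f - (r k : ℂ) * g k),
      ← sub_mul]
  rw [h1, h3]
  have h23 : (∑ l, p l.succ * ((N : ℂ) - M) * (f - (r l : ℂ) * g l))
      + (∑ k, p k.succ * (((M - t) - ((mt k : ℂ) - (r k : ℂ))) * (f - (r k : ℂ) * g k)))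
      = ∑ k, (p k.succ * (((N : ℂ) - (mt k : ℂ) - t) * f)
          - ((N : ℂ) + 1 - t) * (p k.succ * ((r k : ℂ) * g k))) := by
    rw [← Finset.sum_add_distrib]
    refine Finset.sum_congr rfl fun k _ => ?_
    linear_combination (-(p k.succ)) * hfg k
  rw [add_assoc (p 0 * ((M - t) * f)), h23, Finset.sum_sub_distrib, ← Finset.mul_sum]
  have h5 : ∑ k, p k.succ * (((N : ℂ) - (mt k : ℂ) - t) * f)
      = ((N : ℂ) - t) * (∑ k : Fin d, p k.succ) * f - (∑ j, (mt j : ℂ) * p j.succ) * f := by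
    have : ∀ k : Fin d, p k.succ * (((N : ℂ) - (mt k : ℂ) - t) * f)
        = p k.succ * (((N : ℂ) - t) * f) - ((mt k : ℂ) * p k.succ) * f := by
      intro k; ring
    rw [Finset.sum_congr rfl fun k _ => this k, Finset.sum_sub_distrib, ← Finset.sum_mul,
      ← Finset.sum_mul]
    ring
  rw [h5]
  linear_combination ((N : ℂ) - t) * f * hsum'
lemma hswap' {ι κ : Type*} [Fintype κ] [DecidableEq ι] (s : Finset ι) (c : ι → ℂ)
    (F : ι → κ → ℂ) :
    ∑ l ∈ s, c l * ∑ A, F l A = ∑ A, ∑ l ∈ s, c l * F l A := by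
  simp only [Finset.mul_sum]; exact Finset.sum_comm

lemma tA_cast {d N : ℕ} (A : Fin d → Fin d → Fin (N+1)) :
    (tA A : ℂ) = ∑ k, (rA A k : ℂ) := by
  unfold tA rA; push_cast; rfl

lemma stepC (d N : ℕ) (U : Matrix (Fin (d+1)) (Fin (d+1)) ℂ) (p : Fin (d+1) → ℂ)
    (hsum : ∑ j, p j = 1) (m mt : Fin d → ℕ) :
    p 0 * (∑ l, (mt l : ℂ) * kraw d N U m (Function.update mt l (mt l - 1)))
        + (∑ l, p l.succ * ((N : ℂ) - ∑ i, (mt i : ℂ))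
            * kraw d N U m (Function.update mt l (mt l + 1)))
        + (∑ k, ∑ l ∈ Finset.univ.erase k,
            p k.succ * (mt l : ℂ)
              * kraw d N U m
                  (Function.update (Function.update mt k (mt k + 1)) l (mt l - 1)))
        + ((∑ j, (mt j : ℂ) * p j.succ) + p 0 * ((N : ℂ) - ∑ i, (mt i : ℂ)) - (N : ℂ))
            * kraw d N U m mt
      = ∑ A : Fin d → Fin d → Fin (N+1),
          if tA A ≤ N then
            Phi U m A * ((-(tA A : ℂ)) * Ff A mt
              - ((N : ℂ) + 1 - (tA A : ℂ)) * ∑ k, p k.succ * ((rA A k : ℂ) * Gg A k mt))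
          else 0 := by
  simp only [kraw_eq]
  rw [hswap' Finset.univ (fun l => (mt l : ℂ))
        (fun l A => if tA A ≤ N then Phi U m A * Ff A (Function.update mt l (mt l - 1)) else 0),
      hswap' Finset.univ (fun l => p l.succ * ((N : ℂ) - ∑ i, (mt i : ℂ)))
        (fun l A => if tA A ≤ N then Phi U m A * Ff A (Function.update mt l (mt l + 1)) else 0)]
  have t3 : (∑ k, ∑ l ∈ Finset.univ.erase k,
        p k.succ * (mt l : ℂ) * ∑ A : Fin d → Fin d → Fin (N+1),
          (if tA A ≤ N then Phi U m A
              * Ff A (Function.update (Function.update mt k (mt k + 1)) l (mt l - 1)) else 0))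
      = ∑ A : Fin d → Fin d → Fin (N+1), ∑ k, ∑ l ∈ Finset.univ.erase k,
          p k.succ * (mt l : ℂ) * (if tA A ≤ N then Phi U m A
              * Ff A (Function.update (Function.update mt k (mt k + 1)) l (mt l - 1)) else 0) := by
    rw [Finset.sum_comm]
    refine Finset.sum_congr rfl fun k _ => ?_
    exact hswap' _ (fun l => p k.succ * (mt l : ℂ)) _
  rw [t3, Finset.mul_sum, Finset.mul_sum,
    ← Finset.sum_add_distrib, ← Finset.sum_add_distrib, ← Finset.sum_add_distrib]
  refine Finset.sum_congr rfl fun A _ => ?_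
  by_cases hc : tA A ≤ N
  · simp only [hc, if_true]
    have E1 : ∑ l, (mt l : ℂ) * (Phi U m A * Ff A (Function.update mt l (mt l - 1)))
        = Phi U m A * ∑ l, ((mt l : ℂ) - (rA A l : ℂ)) * Ff A mt := by
      rw [Finset.mul_sum]
      exact Finset.sum_congr rfl fun l _ => by linear_combination (Phi U m A) * B1 A mt l
    have E2 : ∑ l, p l.succ * ((N : ℂ) - ∑ i, (mt i : ℂ))
          * (Phi U m A * Ff A (Function.update mt l (mt l + 1)))
        = Phi U m A * ∑ l, p l.succ * ((N : ℂ) - ∑ i, (mt i : ℂ))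
            * (Ff A mt - (rA A l : ℂ) * Gg A l mt) := by
      rw [Finset.mul_sum]
      exact Finset.sum_congr rfl fun l _ => by
        linear_combination (p l.succ * ((N : ℂ) - ∑ i, (mt i : ℂ)) * Phi U m A) * B2 A mt l
    have E3 : ∑ k, ∑ l ∈ Finset.univ.erase k, p k.succ * (mt l : ℂ)
          * (Phi U m A * Ff A (Function.update (Function.update mt k (mt k + 1)) l (mt l - 1)))
        = Phi U m A * ∑ k, ∑ l ∈ Finset.univ.erase k,
            p k.succ * (((mt l : ℂ) - (rA A l : ℂ)) * (Ff A mt - (rA A k : ℂ) * Gg A k mt)) := by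
      rw [Finset.mul_sum]
      refine Finset.sum_congr rfl fun k _ => ?_
      rw [Finset.mul_sum]
      refine Finset.sum_congr rfl fun l hl => ?_
      have hlk : l ≠ k := (Finset.mem_erase.mp hl).1
      linear_combination (p k.succ * Phi U m A) * B3 A mt k l hlk
    rw [E1, E2, E3]
    have key := coefStep (N := N) p hsum mt (rA A) (tA A) (tA_cast A) (Ff A mt)
      (fun k => Gg A k mt) (fun k => hfgA A mt k)
    linear_combination (Phi U m A) * key
  · simp [hc]
section Shift
variable {d N : ℕ}

def shiftE (k j : Fin d) : (Fin d → Fin d → Fin (N+1)) ≃ (Fin d → Fin d → Fin (N+1)) where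
  toFun A := Function.update A k (Function.update (A k) j (A k j + 1))
  invFun A := Function.update A k (Function.update (A k) j (A k j - 1))
  left_inv A := by
    simp [Function.update_idem, add_sub_cancel_right, Function.update_eq_self]
  right_inv A := by
    simp [Function.update_idem, sub_add_cancel, Function.update_eq_self]

variable (k j : Fin d) (A : Fin d → Fin d → Fin (N+1))

lemma shiftE_kj : shiftE k j A k j = A k j + 1 := by simp [shiftE]

lemma shiftE_ne {i j' : Fin d} (h : ¬(i = k ∧ j' = j)) : shiftE k j A i j' = A i j' := by
  by_cases hi : i = k
  · subst hi
    have hj : j' ≠ j := fun hh => h ⟨rfl, hh⟩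
    simp [shiftE, Function.update_of_ne hj]
  · simp [shiftE, Function.update_of_ne hi]

lemma shiftE_kj_val (hb : (A k j : ℕ) < N) :
    ((shiftE k j A) k j : ℕ) = (A k j : ℕ) + 1 := by
  rw [shiftE_kj]
  exact Fin.val_add_one_of_lt (by rw [Fin.lt_iff_val_lt_val, Fin.val_last]; exact hb)

lemma rA_shift_self (hb : (A k j : ℕ) < N) : rA (shiftE k j A) k = rA A k + 1 := by
  rw [rA, rA, ← Finset.add_sum_erase _ _ (mem_univ j), ← Finset.add_sum_erase _ _ (mem_univ j),
    shiftE_kj_val k j A hb,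
    Finset.sum_congr rfl (fun j' hj' => by
      rw [shiftE_ne k j A (fun hh => (Finset.mem_erase.mp hj').1 hh.2)])]
  omega

lemma rA_shift_ne (i : Fin d) (hi : i ≠ k) : rA (shiftE k j A) i = rA A i := by
  rw [rA, rA]
  exact Finset.sum_congr rfl fun j' _ => by rw [shiftE_ne k j A (fun hh => hi hh.1)]

lemma cA_shift_self (hb : (A k j : ℕ) < N) : cA (shiftE k j A) j = cA A j + 1 := by
  rw [cA, cA, ← Finset.add_sum_erase _ _ (mem_univ k), ← Finset.add_sum_erase _ _ (mem_univ k),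
    shiftE_kj_val k j A hb,
    Finset.sum_congr rfl (fun i hi => by
      rw [shiftE_ne k j A (fun hh => (Finset.mem_erase.mp hi).1 hh.1)])]
  omega

lemma cA_shift_ne (j' : Fin d) (hj : j' ≠ j) : cA (shiftE k j A) j' = cA A j' := by
  rw [cA, cA]
  exact Finset.sum_congr rfl fun i _ => by rw [shiftE_ne k j A (fun hh => hj hh.2)]

lemma tA_eq_sum_rA : tA A = ∑ i, rA A i := rfl

lemma tA_shift (hb : (A k j : ℕ) < N) : tA (shiftE k j A) = tA A + 1 := by
  rw [tA_eq_sum_rA, tA_eq_sum_rA, ← Finset.add_sum_erase _ _ (mem_univ k),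
    ← Finset.add_sum_erase _ _ (mem_univ k), rA_shift_self k j A hb,
    Finset.sum_congr rfl (fun i hi => rA_shift_ne k j A i (Finset.mem_erase.mp hi).1)]
  have he : (Finset.univ.erase k).sum (rA A) = ∑ x ∈ Finset.univ.erase k, rA A x := rfl
  omega

lemma entry_le_tA : (A k j : ℕ) ≤ tA A := by
  have h1 : (A k j : ℕ) ≤ ∑ j', (A k j' : ℕ) :=
    Finset.single_le_sum (f := fun j' => (A k j' : ℕ)) (fun _ _ => Nat.zero_le _) (mem_univ j)
  have h2 : (∑ j', (A k j' : ℕ)) ≤ ∑ i, ∑ j', (A i j' : ℕ) :=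
    Finset.single_le_sum (f := fun i => ∑ j', (A i j' : ℕ)) (fun _ _ => Nat.zero_le _) (mem_univ k)
  exact le_trans h1 h2

lemma Gg_shift (mt : Fin d → ℕ) (hb : (A k j : ℕ) < N) :
    Gg (shiftE k j A) k mt = Ff A mt := by
  rw [Gg, rA_shift_self k j A hb, Nat.add_sub_cancel, Ff_split A mt k]
  congr 1
  exact Finset.prod_congr rfl fun i hi => by
    rw [rA_shift_ne k j A i (Finset.mem_erase.mp hi).1]

lemma Num_shift (m : Fin d → ℕ) (hb : (A k j : ℕ) < N) :
    (∏ j', (ascPochhammer ℂ (cA (shiftE k j A) j')).eval (-(m j' : ℂ)))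
      = (∏ j', (ascPochhammer ℂ (cA A j')).eval (-(m j' : ℂ)))
          * (-(m j : ℂ) + (cA A j : ℂ)) := by
  rw [← Finset.mul_prod_erase _ _ (mem_univ j), ← Finset.mul_prod_erase _ _ (mem_univ j),
    cA_shift_self k j A hb, ascPochhammer_succ_eval,
    Finset.prod_congr rfl (fun j' hj' => by
      rw [cA_shift_ne k j A j' (Finset.mem_erase.mp hj').1])]
  ring

end Shift
section Shift2
variable {d N : ℕ} (k j : Fin d) (A : Fin d → Fin d → Fin (N+1))
lemma cancel_aux (w C F0 b1 x : ℂ) (hb1 : b1 ≠ 0) :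
    x * w / (b1 * F0) * C * b1 = w * (x / F0 * C) := by
  field_simp

lemma Omega_shift (U : Matrix (Fin (d+1)) (Fin (d+1)) ℂ) (hb : (A k j : ℕ) < N) :
    (∏ i, ∏ j', (1 - U i.succ j'.succ) ^ ((shiftE k j A) i j' : ℕ)
        / (((shiftE k j A) i j' : ℕ).factorial : ℂ)) * (((A k j : ℕ) : ℂ) + 1)
      = (1 - U k.succ j.succ)
          * ∏ i, ∏ j', (1 - U i.succ j'.succ) ^ (A i j' : ℕ) / (((A i j' : ℕ)).factorial : ℂ) := by
  have split : ∀ B : Fin d → Fin d → Fin (N+1),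
      (∏ i, ∏ j', (1 - U i.succ j'.succ) ^ (B i j' : ℕ) / (((B i j' : ℕ)).factorial : ℂ))
        = ((1 - U k.succ j.succ) ^ (B k j : ℕ) / (((B k j : ℕ)).factorial : ℂ))
          * ((∏ j' ∈ Finset.univ.erase j,
                (1 - U k.succ j'.succ) ^ (B k j' : ℕ) / (((B k j' : ℕ)).factorial : ℂ))
             * ∏ i ∈ Finset.univ.erase k, ∏ j',
                (1 - U i.succ j'.succ) ^ (B i j' : ℕ) / (((B i j' : ℕ)).factorial : ℂ)) := by
    intro B
    rw [← Finset.mul_prod_erase _ _ (mem_univ k),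
      ← Finset.mul_prod_erase _ _ (mem_univ j), mul_assoc]
  rw [split, split A]
  have e1 : ∀ j' ∈ Finset.univ.erase j,
      (1 - U k.succ j'.succ) ^ ((shiftE k j A) k j' : ℕ) / ((((shiftE k j A) k j' : ℕ)).factorial : ℂ)
        = (1 - U k.succ j'.succ) ^ (A k j' : ℕ) / (((A k j' : ℕ)).factorial : ℂ) := by
    intro j' hj'
    rw [shiftE_ne k j A (fun hh => (Finset.mem_erase.mp hj').1 hh.2)]
  have e2 : ∀ i ∈ Finset.univ.erase k, (∏ j',
      (1 - U i.succ j'.succ) ^ ((shiftE k j A) i j' : ℕ) / ((((shiftE k j A) i j' : ℕ)).factorial : ℂ))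
        = ∏ j', (1 - U i.succ j'.succ) ^ (A i j' : ℕ) / (((A i j' : ℕ)).factorial : ℂ) := by
    intro i hi
    exact Finset.prod_congr rfl fun j' _ => by
      rw [shiftE_ne k j A (fun hh => (Finset.mem_erase.mp hi).1 hh.1)]
  rw [Finset.prod_congr rfl e1, Finset.prod_congr rfl e2, shiftE_kj_val k j A hb]
  set b := (A k j : ℕ)
  have hfac : (((b+1).factorial : ℕ) : ℂ) = ((b : ℂ) + 1) * ((b.factorial : ℕ) : ℂ) := by
    push_cast [Nat.factorial_succ]; ring
  have hb1 : ((b : ℂ) + 1) ≠ 0 := by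
    have h2 : ((b : ℂ) + 1) = ((b + 1 : ℕ) : ℂ) := by push_cast; ring
    rw [h2, Ne, Nat.cast_eq_zero]
    omega
  have hfacne : ((b.factorial : ℕ) : ℂ) ≠ 0 := Nat.cast_ne_zero.mpr (Nat.factorial_ne_zero b)
  rw [pow_succ, hfac]
  exact cancel_aux _ _ _ _ _ hb1

end Shift2
lemma cancel_aux3 (Nm q Om Fb w b1 Nc tc mj ca : ℂ) (hq : q ≠ 0)
    (htN : (tc : ℂ) - Nc ≠ 0) (hb1 : b1 ≠ 0) :
    Nm * (-mj + ca) / (q * (-Nc + tc)) * (w * Om / b1) * ((Nc + 1 - (tc + 1)) * (b1 * Fb))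
      = w * (Nm / q * Om * ((mj - ca) * Fb)) := by
  have h2 : -Nc + tc ≠ 0 := by intro h; exact htN (by linear_combination h)
  field_simp
  ring

lemma stepD {d N : ℕ} (hN : 1 ≤ N) (U : Matrix (Fin (d+1)) (Fin (d+1)) ℂ)
    (m mt : Fin d → ℕ) (k j : Fin d) :
    (∑ A : Fin d → Fin d → Fin (N+1),
        if tA A ≤ N then
          Phi U m A * (((N : ℂ) + 1 - (tA A : ℂ)) * (((A k j : ℕ) : ℂ) * Gg A k mt))
        else 0)
      = (1 - U k.succ j.succ) * ∑ B : Fin d → Fin d → Fin (N+1),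
          if tA B ≤ N - 1 then
            Phi U m B * (((m j : ℂ) - (cA B j : ℂ)) * Ff B mt)
          else 0 := by
  rw [← Equiv.sum_comp (shiftE k j) (fun A : Fin d → Fin d → Fin (N+1) =>
    if tA A ≤ N then
      Phi U m A * (((N : ℂ) + 1 - (tA A : ℂ)) * (((A k j : ℕ) : ℂ) * Gg A k mt))
    else 0), Finset.mul_sum]
  refine Finset.sum_congr rfl fun B _ => ?_
  by_cases hb : (B k j : ℕ) < N
  · by_cases ht : tA B ≤ N - 1
    · have h1 : tA (shiftE k j B) ≤ N := by rw [tA_shift k j B hb]; omega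
      rw [if_pos h1, if_pos ht]
      have hval := shiftE_kj_val k j B hb
      have hOmega := Omega_shift k j B U hb
      have hb1 : (((B k j : ℕ) : ℂ) + 1) ≠ 0 := by
        have h2 : (((B k j : ℕ) : ℂ) + 1) = (((B k j : ℕ) + 1 : ℕ) : ℂ) := by push_cast; ring
        rw [h2, Ne, Nat.cast_eq_zero]; omega
      have hOm : (∏ i, ∏ j', (1 - U i.succ j'.succ) ^ ((shiftE k j B) i j' : ℕ)
            / (((shiftE k j B) i j' : ℕ).factorial : ℂ))
          = (1 - U k.succ j.succ)
              * (∏ i, ∏ j', (1 - U i.succ j'.succ) ^ (B i j' : ℕ)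
                  / (((B i j' : ℕ)).factorial : ℂ)) / (((B k j : ℕ) : ℂ) + 1) := by
        rw [eq_div_iff hb1]; exact hOmega
      have hq : (ascPochhammer ℂ (tA B)).eval (-(N : ℂ)) ≠ 0 :=
        poch_eval_neg_nat_ne_zero (by omega)
      have htN : ((tA B : ℂ) - (N : ℂ)) ≠ 0 := by
        have : (tA B : ℕ) ≠ N := by omega
        intro hc
        apply this
        have : ((tA B : ℕ) : ℂ) = (N : ℂ) := by linear_combination hc
        exact_mod_cast this
      rw [Phi, Phi, Num_shift k j B m hb, tA_shift k j B hb, Gg_shift k j B mt hb, hval,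
        ascPochhammer_succ_eval, hOm]
      push_cast
      exact cancel_aux3 _ _ _ _ _ _ _ _ _ _ hq htN hb1
    · have h1 : ¬ (tA (shiftE k j B) ≤ N) := by rw [tA_shift k j B hb]; omega
      rw [if_neg h1, if_neg ht, mul_zero]
  · have hbv : (B k j : ℕ) = N := by have := (B k j).isLt; omega
    have h0 : ((shiftE k j B) k j : ℕ) = 0 := by
      rw [shiftE_kj]
      have : B k j = Fin.last N := by
        apply Fin.ext; rw [Fin.val_last]; exact hbv
      rw [this, Fin.last_add_one, Fin.val_zero]
    have hnt : ¬ (tA B ≤ N - 1) := by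
      have := entry_le_tA k j B
      omega
    rw [if_neg hnt, mul_zero]
    by_cases h1 : tA (shiftE k j B) ≤ N
    · rw [if_pos h1, h0]
      push_cast
      ring
    · rw [if_neg h1]
lemma rA_cast {d N : ℕ} (A : Fin d → Fin d → Fin (N+1)) (k : Fin d) :
    ((rA A k : ℕ) : ℂ) = ∑ j', ((A k j' : ℕ) : ℂ) := by
  rw [rA]; push_cast; rfl

lemma tA_cast_c {d N : ℕ} (A : Fin d → Fin d → Fin (N+1)) :
    (tA A : ℂ) = ∑ j, (cA A j : ℂ) := by
  have : tA A = ∑ j, cA A j := by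
    rw [tA]; unfold cA; exact Finset.sum_comm
  rw [this]; push_cast; rfl

lemma stepD3 {d N : ℕ} (hN : 1 ≤ N) (U : Matrix (Fin (d+1)) (Fin (d+1)) ℂ)
    (p : Fin (d+1) → ℂ) (m mt : Fin d → ℕ)
    (homega : ∀ j : Fin d, ∑ k : Fin d, p k.succ * (1 - U k.succ j.succ) = 1) :
    (∑ A : Fin d → Fin d → Fin (N+1),
        if tA A ≤ N then Phi U m A * (((N : ℂ) + 1 - (tA A : ℂ))
          * ∑ k, p k.succ * ((rA A k : ℂ) * Gg A k mt)) else 0)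
      = ∑ B : Fin d → Fin d → Fin (N+1),
          if tA B ≤ N - 1 then
            Phi U m B * (((∑ i, (m i : ℂ)) - (tA B : ℂ)) * Ff B mt) else 0 := by
  have e1 : ∀ A : Fin d → Fin d → Fin (N+1),
      (if tA A ≤ N then Phi U m A * (((N : ℂ) + 1 - (tA A : ℂ))
          * ∑ k, p k.succ * ((rA A k : ℂ) * Gg A k mt)) else 0)
      = ∑ k, ∑ j, p k.succ * (if tA A ≤ N then Phi U m A * (((N : ℂ) + 1 - (tA A : ℂ))
          * (((A k j : ℕ) : ℂ) * Gg A k mt)) else 0) := by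
    intro A
    by_cases hc : tA A ≤ N
    · simp only [hc, if_true]
      rw [Finset.mul_sum, Finset.mul_sum]
      refine Finset.sum_congr rfl fun k _ => ?_
      rw [rA_cast A k, Finset.sum_mul, Finset.mul_sum, Finset.mul_sum, Finset.mul_sum]
      refine Finset.sum_congr rfl fun j _ => ?_
      ring
    · simp [hc]
  rw [Finset.sum_congr rfl fun A _ => e1 A]
  rw [Finset.sum_comm]
  have e2 : ∀ k : Fin d, (∑ A : Fin d → Fin d → Fin (N+1), ∑ j,
      p k.succ * (if tA A ≤ N then Phi U m A * (((N : ℂ) + 1 - (tA A : ℂ))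
          * (((A k j : ℕ) : ℂ) * Gg A k mt)) else 0))
      = ∑ j, p k.succ * ((1 - U k.succ j.succ)
          * ∑ B : Fin d → Fin d → Fin (N+1),
            if tA B ≤ N - 1 then
              Phi U m B * (((m j : ℂ) - (cA B j : ℂ)) * Ff B mt) else 0) := by
    intro k
    rw [Finset.sum_comm]
    refine Finset.sum_congr rfl fun j _ => ?_
    rw [← Finset.mul_sum, stepD hN U m mt k j]
  rw [Finset.sum_congr rfl fun k _ => e2 k, Finset.sum_comm]
  have e3 : ∀ j : Fin d, (∑ k : Fin d, p k.succ * ((1 - U k.succ j.succ)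
        * ∑ B : Fin d → Fin d → Fin (N+1),
            if tA B ≤ N - 1 then
              Phi U m B * (((m j : ℂ) - (cA B j : ℂ)) * Ff B mt) else 0))
      = ∑ B : Fin d → Fin d → Fin (N+1),
          if tA B ≤ N - 1 then
            Phi U m B * (((m j : ℂ) - (cA B j : ℂ)) * Ff B mt) else 0 := by
    intro j
    rw [show (∑ k : Fin d, p k.succ * ((1 - U k.succ j.succ)
        * ∑ B : Fin d → Fin d → Fin (N+1),
            if tA B ≤ N - 1 then
              Phi U m B * (((m j : ℂ) - (cA B j : ℂ)) * Ff B mt) else 0))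
      = (∑ k : Fin d, p k.succ * (1 - U k.succ j.succ))
          * ∑ B : Fin d → Fin d → Fin (N+1),
            if tA B ≤ N - 1 then
              Phi U m B * (((m j : ℂ) - (cA B j : ℂ)) * Ff B mt) else 0 from by
        rw [Finset.sum_mul]
        exact Finset.sum_congr rfl fun k _ => by ring]
    rw [homega j, one_mul]
  rw [Finset.sum_congr rfl fun j _ => e3 j, Finset.sum_comm]
  refine Finset.sum_congr rfl fun B _ => ?_
  by_cases hc : tA B ≤ N - 1
  · simp only [hc, if_true]
    rw [show (∑ j, Phi U m B * (((m j : ℂ) - (cA B j : ℂ)) * Ff B mt))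
        = Phi U m B * ((∑ j, ((m j : ℂ) - (cA B j : ℂ))) * Ff B mt) from by
      rw [Finset.sum_mul, Finset.mul_sum]]
    rw [Finset.sum_sub_distrib, ← tA_cast_c]
  · simp [hc]
lemma matrix_rel (d : ℕ) (ν : ℂ) (hν : ν ≠ 0) (p pt : Fin (d+1) → ℂ)
    (U : Matrix (Fin (d+1)) (Fin (d+1)) ℂ)
    (hpt0 : pt 0 = 1/ν) (hU : ∀ j, U 0 j = 1 ∧ U j 0 = 1)
    (hK : ν • (Matrix.diagonal p * U * Matrix.diagonal pt * U.transpose) = 1) :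
    ∀ x : Fin (d+1), ∑ k, p k * U k x = if x = 0 then 1 else 0 := by
  have h1 : Matrix.diagonal p * (ν • (U * Matrix.diagonal pt * U.transpose)) = 1 := by
    rw [Matrix.mul_smul, ← hK]
    congr 1
    rw [← Matrix.mul_assoc, ← Matrix.mul_assoc]
  have h2 := mul_eq_one_comm.mp h1
  have h3 : U * (ν • (Matrix.diagonal pt * U.transpose * Matrix.diagonal p)) = 1 := by
    rw [Matrix.mul_smul, ← h2, Matrix.smul_mul]
    congr 1
    rw [← Matrix.mul_assoc, ← Matrix.mul_assoc]
  have h4 := mul_eq_one_comm.mp h3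
  rw [Matrix.smul_mul] at h4
  intro x
  have h5 := congrFun (congrFun h4 0) x
  simp only [Matrix.smul_apply, Matrix.mul_apply, Matrix.diagonal_apply, Matrix.transpose_apply,
    Matrix.one_apply, smul_eq_mul, ite_mul, zero_mul, mul_ite, mul_zero,
    Finset.sum_ite_eq, Finset.sum_ite_eq', Finset.mem_univ, if_true] at h5
  have hs : ∀ k, pt 0 * U k 0 * p k * U k x = pt 0 * (p k * U k x) := by
    intro k; rw [(hU k).2]; ring
  rw [Finset.sum_congr rfl fun k _ => hs k, ← Finset.mul_sum] at h5
  have hν' : ν * pt 0 = 1 := by rw [hpt0]; field_simp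
  have h6 : ∑ k, p k * U k x = if 0 = x then 1 else 0 := by
    calc ∑ k, p k * U k x = (ν * pt 0) * ∑ k, p k * U k x := by rw [hν', one_mul]
      _ = ν * (pt 0 * ∑ k, p k * U k x) := by ring
      _ = if 0 = x then 1 else 0 := h5
  rw [h6]
  by_cases hx : x = 0
  · subst hx; simp
  · rw [if_neg hx, if_neg (fun h => hx h.symm)]

lemma tA_eq_sum_cA {d N : ℕ} (A : Fin d → Fin d → Fin (N+1)) :
    tA A = ∑ j, cA A j := by
  rw [tA]; unfold cA; exact Finset.sum_comm

lemma stepF {d N : ℕ} (U : Matrix (Fin (d+1)) (Fin (d+1)) ℂ) (m mt : Fin d → ℕ)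
    (hm : ∑ i, m i ≤ N) :
    (∑ B : Fin d → Fin d → Fin (N+1),
        if tA B ≤ N - 1 then
          Phi U m B * (((∑ i, (m i : ℂ)) - (tA B : ℂ)) * Ff B mt) else 0)
      = ∑ B : Fin d → Fin d → Fin (N+1),
          if tA B ≤ N then
            Phi U m B * (((∑ i, (m i : ℂ)) - (tA B : ℂ)) * Ff B mt) else 0 := by
  refine Finset.sum_congr rfl fun B _ => ?_
  by_cases h1 : tA B ≤ N - 1
  · rw [if_pos h1, if_pos (by omega)]
  · by_cases h2 : tA B ≤ N
    · have htB : tA B = N := by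
        rcases Nat.eq_or_lt_of_le h2 with h | h
        · exact h
        · omega
      rw [if_neg h1, if_pos h2]
      by_cases hms : ∑ i, m i = N
      · have hz : ((∑ i, (m i : ℂ)) - (tA B : ℂ)) = 0 := by
          rw [htB]
          have hcast : (∑ i, (m i : ℂ)) = ((∑ i, m i : ℕ) : ℂ) := by push_cast; rfl
          rw [hcast, hms]; ring
        rw [hz]; ring
      · have hlt : ∑ i, m i < N := by omega
        have hex : ∃ j, m j < cA B j := by
          by_contra hcon
          push_neg at hcon
          have hle : ∑ j, cA B j ≤ ∑ j, m j := Finset.sum_le_sum fun j _ => hcon j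
          have ht' : ∑ j, cA B j = tA B := (tA_eq_sum_cA B).symm
          omega
        obtain ⟨j, hj⟩ := hex
        have hz : Phi U m B = 0 := by
          rw [Phi]
          have hnum : (∏ j', (ascPochhammer ℂ (cA B j')).eval (-(m j' : ℂ))) = 0 :=
            Finset.prod_eq_zero (mem_univ j) (poch_eval_neg_nat_zero hj)
          rw [hnum, zero_div, zero_mul]
        rw [hz]; ring
    · rw [if_neg h1, if_neg h2]
theorem stmt_16 (d : ℕ) (hd : 1 ≤ d) (ν : ℂ) (hν : ν ≠ 0)
    (p pt : Fin (d+1) → ℂ) (U : Matrix (Fin (d+1)) (Fin (d+1)) ℂ)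
    (hp0 : p 0 = 1/ν) (hpt0 : pt 0 = 1/ν)
    (hU : ∀ j, U 0 j = 1 ∧ U j 0 = 1)
    (hK : ν • (Matrix.diagonal p * U * Matrix.diagonal pt * U.transpose) = 1)
    (N : ℕ) (hN : 1 ≤ N)
    (m mt : Fin d → ℕ) (hm : ∑ i, m i ≤ N) (hmt : ∑ i, mt i ≤ N) :
    -(∑ i, (m i : ℂ)) * kraw d N U m mt
      = p 0 * (∑ l, (mt l : ℂ) * kraw d N U m (Function.update mt l (mt l - 1)))
        + (∑ l, p l.succ * ((N : ℂ) - ∑ i, (mt i : ℂ))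
            * kraw d N U m (Function.update mt l (mt l + 1)))
        + (∑ k, ∑ l ∈ Finset.univ.erase k,
            p k.succ * (mt l : ℂ)
              * kraw d N U m
                  (Function.update (Function.update mt k (mt k + 1)) l (mt l - 1)))
        + ((∑ j, (mt j : ℂ) * p j.succ) + p 0 * ((N : ℂ) - ∑ i, (mt i : ℂ)) - (N : ℂ))
            * kraw d N U m mt := by
  have hrel := matrix_rel d ν hν p pt U hpt0 hU hK
  have hsum : ∑ j, p j = 1 := by
    have h0 := hrel 0
    rw [if_pos rfl] at h0
    rw [← h0]
    exact Finset.sum_congr rfl fun k _ => by rw [(hU k).2, mul_one]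
  have homega : ∀ j : Fin d, ∑ k : Fin d, p k.succ * (1 - U k.succ j.succ) = 1 := by
    intro j
    have hrow := hrel j.succ
    rw [if_neg (Fin.succ_ne_zero j)] at hrow
    rw [Fin.sum_univ_succ, (hU j.succ).1, mul_one] at hrow
    have hp' : p 0 + ∑ l : Fin d, p l.succ = 1 := by
      rw [← Fin.sum_univ_succ]; exact hsum
    have expand : ∑ k : Fin d, p k.succ * (1 - U k.succ j.succ)
        = (∑ k : Fin d, p k.succ) - ∑ k : Fin d, p k.succ * U k.succ j.succ := by
      rw [← Finset.sum_sub_distrib]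
      exact Finset.sum_congr rfl fun k _ => by ring
    rw [expand]
    have h1 : ∑ k : Fin d, p k.succ * U k.succ j.succ = -(p 0) := by
      linear_combination hrow
    rw [h1]
    linear_combination hp'
  rw [stepC d N U p hsum m mt, kraw_eq]
  have hsplit : (∑ A : Fin d → Fin d → Fin (N+1),
        if tA A ≤ N then
          Phi U m A * ((-(tA A : ℂ)) * Ff A mt
            - ((N : ℂ) + 1 - (tA A : ℂ)) * ∑ k, p k.succ * ((rA A k : ℂ) * Gg A k mt))
        else 0)
      = (∑ A : Fin d → Fin d → Fin (N+1),
          if tA A ≤ N then Phi U m A * ((-(tA A : ℂ)) * Ff A mt) else 0)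
        - ∑ A : Fin d → Fin d → Fin (N+1),
            if tA A ≤ N then
              Phi U m A * (((N : ℂ) + 1 - (tA A : ℂ))
                * ∑ k, p k.succ * ((rA A k : ℂ) * Gg A k mt))
            else 0 := by
    rw [← Finset.sum_sub_distrib]
    refine Finset.sum_congr rfl fun A _ => ?_
    by_cases hc : tA A ≤ N
    · simp only [hc, if_true]; ring
    · simp [hc]
  rw [hsplit, stepD3 hN U p m mt homega, stepF U m mt hm, ← Finset.sum_sub_distrib,
    Finset.mul_sum]
  refine Finset.sum_congr rfl fun A _ => ?_
  by_cases hc : tA A ≤ N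
  · simp only [hc, if_true]; ring
  · simp [hc]
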